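/- For every n ≥ 1, the determinant of the n × n matrix whose (i,j) entry is gcd(i,j), for 1 ≤ i,j ≤ n, equals ∏_{i=1}^n φ(i), where φ is Euler's totient function. -/

import Mathlib

open Matrix


/-- Smith's determinant: for every `n ≥ 1`, the determinant of the `n × n`
matrix with `(i,j)` entry `gcd(i,j)` (for `1 ≤ i,j ≤ n`) equals `∏_{i=1}^n φ(i)`, where `φ`
is Euler's totient function. -/
theorem smith_determinant (n : ℕ) (hn : 1 ≤ n) :
    Matrix.det (Matrix.of fun i j : Fin n => (Nat.gcd ((i : ℕ) + 1) ((j : ℕ) + 1) : ℤ)) =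
      ∏ i : Fin n, (Nat.totient ((i : ℕ) + 1) : ℤ) := by
  set L : Matrix (Fin n) (Fin n) ℤ :=
    Matrix.of fun i d : Fin n => if ((d : ℕ) + 1) ∣ ((i : ℕ) + 1) then 1 else 0 with hL
  set D : Matrix (Fin n) (Fin n) ℤ :=
    Matrix.diagonal fun d : Fin n => (Nat.totient ((d : ℕ) + 1) : ℤ) with hD
  have hA : (Matrix.of fun i j : Fin n => (Nat.gcd ((i : ℕ) + 1) ((j : ℕ) + 1) : ℤ))
      = L * D * Lᵀ := by
    ext i j
    have hLD : ∀ a k : Fin n, (L * D) a k =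
        if ((k : ℕ) + 1) ∣ ((a : ℕ) + 1) then (Nat.totient ((k : ℕ) + 1) : ℤ) else 0 := by
      intro a k
      rw [hD, Matrix.mul_diagonal]
      simp [hL, ite_mul]
    have : (L * D * Lᵀ) i j = ∑ k : Fin n,
        (if ((k : ℕ) + 1) ∣ Nat.gcd ((i : ℕ) + 1) ((j : ℕ) + 1)
          then (Nat.totient ((k : ℕ) + 1) : ℤ) else 0) := by
      rw [Matrix.mul_apply]
      simp only [hLD]
      simp only [Matrix.transpose_apply, hL, Matrix.of_apply]
      refine Finset.sum_congr rfl fun k _ => ?_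
      by_cases hi : ((k : ℕ) + 1) ∣ ((i : ℕ) + 1) <;>
        by_cases hj : ((k : ℕ) + 1) ∣ ((j : ℕ) + 1) <;>
        simp [hi, hj, Nat.dvd_gcd_iff]
    rw [this]
    set g := Nat.gcd ((i : ℕ) + 1) ((j : ℕ) + 1) with hg
    have hgpos : 0 < g := Nat.gcd_pos_of_pos_left _ (Nat.succ_pos _)
    have hgle : g ≤ n := le_trans (Nat.le_of_dvd (Nat.succ_pos _) (Nat.gcd_dvd_left _ _))
      (Nat.succ_le_of_lt i.isLt)
    have hsum : ∑ k : Fin n, (if ((k : ℕ) + 1) ∣ g then (Nat.totient ((k : ℕ) + 1) : ℤ) else 0)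
        = (g : ℤ) := by
      rw [Fin.sum_univ_eq_sum_range (fun k => if (k + 1) ∣ g then (Nat.totient (k + 1) : ℤ) else 0)]
      have h1 : ∑ k ∈ Finset.range n, (if (k + 1) ∣ g then (Nat.totient (k + 1) : ℤ) else 0)
          = ∑ d ∈ Finset.Ico 1 (n + 1), (if d ∣ g then (Nat.totient d : ℤ) else 0) := by
        rw [Finset.sum_Ico_eq_sum_range]
        simp [add_comm]
      rw [h1, ← Finset.sum_filter]
      have h2 : Finset.filter (· ∣ g) (Finset.Ico 1 (n + 1)) = g.divisors := by
        ext d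
        simp only [Finset.mem_filter, Finset.mem_Ico, Nat.mem_divisors]
        constructor
        · rintro ⟨⟨h1d, _⟩, hdg⟩
          exact ⟨hdg, hgpos.ne'⟩
        · rintro ⟨hdg, _⟩
          refine ⟨⟨Nat.pos_of_dvd_of_pos hdg hgpos, ?_⟩, hdg⟩
          exact Nat.lt_succ_of_le (le_trans (Nat.le_of_dvd hgpos hdg) hgle)
      rw [h2, ← Nat.cast_sum, Nat.sum_totient]
    rw [hsum]
    simp [hg]
  rw [hA, Matrix.det_mul, Matrix.det_mul, Matrix.det_transpose]
  have hLdet : L.det = 1 := by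
    have htri : L.BlockTriangular OrderDual.toDual := by
      intro i j hij
      simp only [hL, Matrix.of_apply, ite_eq_right_iff]
      intro hdvd
      exact absurd (Nat.le_of_dvd (Nat.succ_pos _) hdvd)
        (not_le.mpr (Nat.succ_lt_succ hij))
    rw [Matrix.det_of_lowerTriangular L htri]
    refine Finset.prod_eq_one fun i _ => ?_
    simp [hL]
  rw [hLdet, Matrix.det_diagonal]
  ring
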